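/- Let r be a positive integer and let f be a finitely supported function from {i/r : i ∈ ℤ≥0} to the nonnegative reals, regarded as a generalized polynomial f(t) = ∑_j f_j t^j with nonnegative coefficients and exponents in (1/r)ℤ≥0. For n ∈ ℤ>0 define f*_n(t) := Ψ(f(t)^n), where Ψ is the linear map sending t^j to t^⌈j⌉. Then for every real x ≥ 1 and every n ≥ 1: f(x)^n ≤ f*_n(x) ≤ x^(1 - 1/r) · f(x)^n. -/

import Mathlib

open Finsupp

/-- Evaluation of a generalized polynomial `∑ c_j t^j` (a finitely supported
function `ℚ →₀ ℝ`, with convolution product) at a positive real `x`, using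
real exponentiation. -/
noncomputable def gpEval (f : AddMonoidAlgebra ℝ ℚ) (x : ℝ) : ℝ :=
  f.coeff.sum fun j c => c * x ^ (j : ℝ)

/-- The linear rounding operator `Ψ` with `Ψ(t^j) = t^⌈j⌉`. -/
noncomputable def gpPsi (f : AddMonoidAlgebra ℝ ℚ) : AddMonoidAlgebra ℝ ℚ :=
  AddMonoidAlgebra.ofCoeff (Finsupp.mapDomain (fun j => (⌈j⌉ : ℚ)) f.coeff)

noncomputable def gpEvalHom (x : ℝ) (hx : 0 < x) : AddMonoidAlgebra ℝ ℚ →+* ℝ :=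
  AddMonoidAlgebra.liftNCRingHom (RingHom.id ℝ)
    { toFun := fun j => x ^ ((Multiplicative.toAdd j : ℚ) : ℝ)
      map_one' := by simp
      map_mul' := fun a b => by
        show x ^ ((Multiplicative.toAdd a + Multiplicative.toAdd b : ℚ) : ℝ) = _
        push_cast
        rw [Real.rpow_add hx] }
    (fun a b => Commute.all _ _)

lemma gpEvalHom_eq (x : ℝ) (hx : 0 < x) (f : AddMonoidAlgebra ℝ ℚ) :
    gpEvalHom x hx f = gpEval f x := by
  simp only [gpEvalHom, AddMonoidAlgebra.liftNCRingHom, gpEval]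
  rfl

lemma gpEval_pow (x : ℝ) (hx : 0 < x) (f : AddMonoidAlgebra ℝ ℚ) (n : ℕ) :
    gpEval (f ^ n) x = gpEval f x ^ n := by
  rw [← gpEvalHom_eq x hx, map_pow, gpEvalHom_eq]

lemma pow_coeff_nonneg (f : AddMonoidAlgebra ℝ ℚ) (hpos : ∀ j, 0 ≤ f.coeff j) (n : ℕ) :
    ∀ j, 0 ≤ (f ^ n).coeff j := by
  induction n with
  | zero =>
    intro j
    classical
    simp only [pow_zero, AddMonoidAlgebra.one_def, AddMonoidAlgebra.coeff_single, Finsupp.single_apply]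
    split <;> norm_num
  | succ n ih =>
    intro j
    rw [pow_succ]
    classical
    rw [AddMonoidAlgebra.coeff_mul]
    refine Finset.sum_nonneg fun a _ => Finset.sum_nonneg fun b _ => ?_
    simp only
    split
    · exact mul_nonneg (ih a) (hpos b)
    · exact le_refl 0

lemma pow_support_exp (r : ℕ) (f : AddMonoidAlgebra ℝ ℚ)
    (hexp : ∀ j ∈ f.coeff.support, ∃ i : ℕ, j = (i : ℚ) / r) (n : ℕ) :
    ∀ j ∈ (f ^ n).coeff.support, ∃ i : ℕ, j = (i : ℚ) / r := by
  induction n with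
  | zero =>
    intro j hj
    simp only [pow_zero] at hj
    rw [AddMonoidAlgebra.one_def] at hj
    have : j = 0 := Finset.mem_singleton.mp (Finsupp.support_single_subset hj)
    exact ⟨0, by simp [this]⟩
  | succ n ih =>
    intro j hj
    classical
    rw [pow_succ] at hj
    obtain ⟨a, ha, b, hb, rfl⟩ := Finset.mem_add.mp (AddMonoidAlgebra.support_coeff_mul_subset _ _ hj)
    obtain ⟨i1, rfl⟩ := ih a ha
    obtain ⟨i2, rfl⟩ := hexp b hb
    exact ⟨i1 + i2, by push_cast; ring⟩

lemma ceil_le_aux (r : ℕ) (hr : 0 < r) (i : ℕ) :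
    (⌈(i : ℚ) / r⌉ : ℚ) ≤ (i : ℚ) / r + 1 - 1 / r := by
  have hr' : (0 : ℚ) < r := by exact_mod_cast hr
  set z := ⌈(i : ℚ) / r⌉ with hz
  have h1 : (z : ℚ) < (i : ℚ) / r + 1 := Int.ceil_lt_add_one _
  have h2 : (r : ℚ) * z < i + r := by
    have := mul_lt_mul_of_pos_left h1 hr'
    calc (r : ℚ) * z < r * ((i : ℚ) / r + 1) := this
      _ = i + r := by field_simp
  have h3 : (r : ℤ) * z < (i : ℤ) + r := by exact_mod_cast h2
  have h4 : (r : ℤ) * z ≤ (i : ℤ) + r - 1 := by omega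
  have h5 : (r : ℚ) * z ≤ (i : ℚ) + r - 1 := by exact_mod_cast h4
  have h6 : (i : ℚ) / r + 1 - 1 / r = ((i : ℚ) + r - 1) / r := by field_simp
  rw [h6, le_div_iff₀ hr']
  linarith

theorem stmt_2 (r : ℕ) (hr : 0 < r) (f : AddMonoidAlgebra ℝ ℚ)
    (hexp : ∀ j ∈ f.coeff.support, ∃ i : ℕ, j = (i : ℚ) / r)
    (hpos : ∀ j, 0 ≤ f.coeff j)
    (x : ℝ) (hx : 1 ≤ x) (n : ℕ) (hn : 1 ≤ n) :
    gpEval f x ^ n ≤ gpEval (gpPsi (f ^ n)) x ∧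
      gpEval (gpPsi (f ^ n)) x ≤ x ^ (1 - 1 / (r : ℝ)) * gpEval f x ^ n := by
  have hx0 : (0 : ℝ) < x := lt_of_lt_of_le one_pos hx
  set g := f ^ n with hg
  have hgpos := pow_coeff_nonneg f hpos n
  have hgexp := pow_support_exp r f hexp n
  have hpsum : gpEval (gpPsi g) x = g.coeff.sum fun j c => c * x ^ ((⌈j⌉ : ℚ) : ℝ) := by
    rw [gpEval, gpPsi, AddMonoidAlgebra.coeff_ofCoeff]
    exact Finsupp.sum_mapDomain_index (fun a => by simp)
      (fun a b₁ b₂ => by rw [add_mul])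
  have hev : gpEval g x = gpEval f x ^ n := gpEval_pow x hx0 f n
  constructor
  · rw [← hev, hpsum, gpEval]
    refine Finset.sum_le_sum fun j hj => ?_
    refine mul_le_mul_of_nonneg_left ?_ (hgpos j)
    exact Real.rpow_le_rpow_of_exponent_le hx (by exact_mod_cast Int.le_ceil j)
  · rw [← hev, hpsum, gpEval, Finsupp.sum, Finsupp.sum, Finset.mul_sum]
    refine Finset.sum_le_sum fun j hj => ?_
    obtain ⟨i, rfl⟩ := hgexp j hj
    have hle : ((⌈(i : ℚ) / r⌉ : ℚ) : ℝ) ≤ (((i : ℚ) / r : ℚ) : ℝ) + (1 - 1 / r) := by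
      have := ceil_le_aux r hr i
      have := (Rat.cast_le (K := ℝ)).mpr this
      push_cast at this ⊢
      linarith
    calc g.coeff ((i : ℚ) / r) * x ^ ((⌈(i : ℚ) / r⌉ : ℚ) : ℝ)
        ≤ g.coeff ((i : ℚ) / r) * x ^ ((((i : ℚ) / r : ℚ) : ℝ) + (1 - 1 / r)) :=
          mul_le_mul_of_nonneg_left (Real.rpow_le_rpow_of_exponent_le hx hle) (hgpos _)
      _ = x ^ (1 - 1 / (r : ℝ)) * (g.coeff ((i : ℚ) / r) * x ^ ((((i : ℚ) / r : ℚ)) : ℝ)) := by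
          rw [Real.rpow_add hx0]; ring
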